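/- arXiv:0912.1866 — 2 statements merged into one kernel-verified Lean document; each statement's English description precedes it below -/
import Mathlib

section
/- There exist constants a, b > 0 and x₀ such that a·x < ϑ(x) < b·x for all x ≥ x₀, where ϑ(x) = ∑_{p ≤ x} log p is the Chebyshev theta function. -/
open Real Filter

section Aux

open Finset Nat Asymptotics

local notation x "#" => primorial x

private theorem cheb_centralBinom_le (n : ℕ) (hn : 0 < n) :
    centralBinom n ≤ (2 * n) ^ Nat.sqrt (2 * n) * (2 * n)# := by
  have n2_pos : 1 ≤ 2 * n := by omega
  let S := (Finset.range (2 * n + 1)).filter Nat.Prime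
  let f := fun x => x ^ n.centralBinom.factorization x
  have hSf : ∏ x ∈ S, f x = ∏ x ∈ Finset.range (2 * n + 1), f x := by
    refine Finset.prod_filter_of_ne fun p _ h => ?_
    contrapose! h; dsimp only [f]
    rw [factorization_eq_zero_of_not_prime n.centralBinom h, _root_.pow_zero]
  have hcb : centralBinom n = ∏ x ∈ S, f x := by
    rw [hSf]; exact n.prod_pow_factorization_centralBinom.symm
  rw [hcb, ← Finset.prod_filter_mul_prod_filter_not S (· ≤ Nat.sqrt (2 * n))]
  apply Nat.mul_le_mul
  · refine (Finset.prod_le_prod' fun p _ => (?_ : f p ≤ 2 * n)).trans ?_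
    · exact pow_factorization_choose_le (by omega)
    have : (Finset.Icc 1 (Nat.sqrt (2 * n))).card = Nat.sqrt (2 * n) := by
      rw [Nat.card_Icc, Nat.add_sub_cancel]
    rw [Finset.prod_const]
    refine pow_right_mono₀ n2_pos ((Finset.card_le_card fun x hx => ?_).trans this.le)
    obtain ⟨h1, h2⟩ := Finset.mem_filter.1 hx
    exact Finset.mem_Icc.mpr ⟨(Finset.mem_filter.1 h1).2.one_lt.le, h2⟩
  · refine (Finset.prod_le_prod' fun p hp => (?_ : f p ≤ p)).trans ?_
    · obtain ⟨h1, h2⟩ := Finset.mem_filter.1 hp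
      refine (pow_right_mono₀ (Finset.mem_filter.1 h1).2.one_lt.le ?_).trans (pow_one p).le
      exact Nat.factorization_choose_le_one (Nat.sqrt_lt'.mp <| not_le.1 h2)
    refine Finset.prod_le_prod_of_subset_of_one_le' (Finset.filter_subset _ _) ?_
    exact fun p hp _ => (Finset.mem_filter.1 hp).2.one_lt.le

private theorem cheb_primorial_mono : Monotone primorial := by
  intro m n h
  exact Finset.prod_le_prod_of_subset_of_one_le'
    (Finset.filter_subset_filter _ (Finset.range_subset_range.2 (by omega)))
    fun p hp _ => (Finset.mem_filter.1 hp).2.one_lt.le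

private theorem cheb_log_lower (n : ℕ) (hn : 4 ≤ n) :
    (n : ℝ) * Real.log 4 ≤ Real.log n + Real.sqrt (2 * n) * Real.log (2 * n)
      + Real.log ((2 * n)# : ℕ) := by
  have hn0 : 0 < n := by omega
  have h1 : (4 : ℕ) ^ n < n * ((2 * n) ^ Nat.sqrt (2 * n) * (2 * n)#) :=
    lt_of_lt_of_le (Nat.four_pow_lt_mul_centralBinom n hn)
      (Nat.mul_le_mul_left n (cheb_centralBinom_le n hn0))
  have h2 : ((4 : ℝ)) ^ n ≤ (n : ℝ) * (((2 * n : ℕ) : ℝ) ^ Nat.sqrt (2 * n) * ((2 * n)# : ℕ)) := by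
    exact_mod_cast h1.le
  have hprim : (0 : ℝ) < ((2 * n)# : ℕ) := by exact_mod_cast primorial_pos (2 * n)
  have h2n : (1 : ℝ) ≤ ((2 * n : ℕ) : ℝ) := by exact_mod_cast (by omega : 1 ≤ 2 * n)
  have hlog := Real.log_le_log (by positivity) h2
  rw [Real.log_pow, Real.log_mul (by positivity) (by positivity),
    Real.log_mul (by positivity) hprim.ne', Real.log_pow] at hlog
  have hsq : ((Nat.sqrt (2 * n) : ℝ)) ≤ Real.sqrt ((2 * n : ℕ) : ℝ) :=
    Real.nat_sqrt_le_real_sqrt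
  have hlog2n : (0 : ℝ) ≤ Real.log ((2 * n : ℕ) : ℝ) := Real.log_nonneg h2n
  have : ((Nat.sqrt (2 * n) : ℝ)) * Real.log ((2 * n : ℕ) : ℝ)
      ≤ Real.sqrt ((2 * n : ℕ) : ℝ) * Real.log ((2 * n : ℕ) : ℝ) :=
    mul_le_mul_of_nonneg_right hsq hlog2n
  have hcast : ((2 * n : ℕ) : ℝ) = 2 * (n : ℝ) := by push_cast; ring
  rw [hcast] at this hlog
  calc (n : ℝ) * Real.log 4 = (n : ℝ) * Real.log 4 := rfl
    _ ≤ Real.log n + ((Nat.sqrt (2 * n) : ℝ) * Real.log (2 * (n : ℝ))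
        + Real.log ((2 * n)# : ℕ)) := by
        have := hlog; push_cast at this; linarith
    _ ≤ Real.log n + Real.sqrt (2 * n) * Real.log (2 * n) + Real.log ((2 * n)# : ℕ) := by
        linarith

private theorem cheb_littleo :
    (fun y : ℝ => Real.log y + Real.sqrt (2 * y) * Real.log (2 * y)) =o[atTop] (id : ℝ → ℝ) := by
  have h1 : Real.log =o[atTop] (id : ℝ → ℝ) := Real.isLittleO_log_id_atTop
  have hlog : Real.log =o[atTop] fun t : ℝ => t ^ (1/2 : ℝ) :=
    isLittleO_log_rpow_atTop (by norm_num)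
  have h2 : (fun t : ℝ => Real.sqrt t * Real.log t) =o[atTop] (id : ℝ → ℝ) := by
    have h := (isBigO_refl (fun t : ℝ => Real.sqrt t) atTop).mul_isLittleO hlog
    have heq : (fun t : ℝ => Real.sqrt t * t ^ (1/2 : ℝ)) =ᶠ[atTop] (id : ℝ → ℝ) := by
      filter_upwards [eventually_ge_atTop (0:ℝ)] with t ht
      rw [Real.sqrt_eq_rpow, ← Real.rpow_add' ht (by norm_num)]
      norm_num
    exact h.trans_isBigO heq.isBigO
  have hcomp : (fun y : ℝ => Real.sqrt (2 * y) * Real.log (2 * y)) =o[atTop]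
      (fun y : ℝ => 2 * y) :=
    h2.comp_tendsto (tendsto_id.const_mul_atTop two_pos)
  exact h1.add (hcomp.trans_isBigO ((isBigO_refl (id : ℝ → ℝ) atTop).const_mul_left 2))

private theorem cheb_eventually_nat :
    ∀ᶠ n : ℕ in atTop, (n : ℝ) ≤ Real.log ((2 * n)# : ℕ) := by
  have hc : 0 < Real.log 4 - 1 := by
    have h4 : Real.exp 1 < 4 := by have := Real.exp_one_lt_d9; linarith
    have : 1 < Real.log 4 := (Real.lt_log_iff_exp_lt (by norm_num)).2 h4
    linarith
  have hev : ∀ᶠ y : ℝ in atTop,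
      Real.log y + Real.sqrt (2 * y) * Real.log (2 * y) ≤ (Real.log 4 - 1) * y := by
    filter_upwards [cheb_littleo.def hc, eventually_ge_atTop (0:ℝ)] with y hy hy0
    calc Real.log y + Real.sqrt (2 * y) * Real.log (2 * y)
        ≤ ‖Real.log y + Real.sqrt (2 * y) * Real.log (2 * y)‖ := le_norm_self _
      _ ≤ (Real.log 4 - 1) * ‖id y‖ := hy
      _ = (Real.log 4 - 1) * y := by simp [abs_of_nonneg hy0]
  have hnat : ∀ᶠ n : ℕ in atTop,
      Real.log n + Real.sqrt (2 * n) * Real.log (2 * n) ≤ (Real.log 4 - 1) * n :=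
    tendsto_natCast_atTop_atTop.eventually hev
  filter_upwards [hnat, eventually_ge_atTop 4] with n h1 h2
  have := cheb_log_lower n h2
  nlinarith [this, h1]

end Aux

/-- The Chebyshev theta function `ϑ(x) = ∑_{p ≤ x} log p`. -/
noncomputable def chebyshevTheta (x : ℝ) : ℝ :=
  ∑ p ∈ Finset.filter Nat.Prime (Finset.range (⌊x⌋₊ + 1)), Real.log p

private theorem chebyshevTheta_eq (x : ℝ) :
    chebyshevTheta x = Real.log ((primorial ⌊x⌋₊ : ℕ) : ℝ) := by
  rw [chebyshevTheta, primorial, Nat.cast_prod, Real.log_prod]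
  exact fun p hp => by exact_mod_cast (Finset.mem_filter.1 hp).2.pos.ne'

/-- **Chebyshev's theorem.** There exist constants `a, b > 0` and `x₀` such that
`a·x < ϑ(x) < b·x` for all `x ≥ x₀`. -/
theorem chebyshevTheta_bounds :
    ∃ a b : ℝ, 0 < a ∧ 0 < b ∧ ∃ x₀ : ℝ, ∀ x : ℝ, x₀ ≤ x →
      a * x < chebyshevTheta x ∧ chebyshevTheta x < b * x := by
  obtain ⟨N, hN⟩ := eventually_atTop.1 cheb_eventually_nat
  refine ⟨1/4, 2, by norm_num, by norm_num, 2 * N + 4, fun x hx => ?_⟩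
  have hx4 : (4 : ℝ) ≤ x := by have : (0:ℝ) ≤ (N:ℝ) := Nat.cast_nonneg N; linarith
  have hx0 : (0 : ℝ) < x := by linarith
  constructor
  · -- lower bound
    set n := ⌊x / 2⌋₊ with hn
    have hxhalf : (0:ℝ) ≤ x / 2 := by linarith
    have hnN : N ≤ n := Nat.le_floor (by exact_mod_cast (by linarith : (N:ℝ) ≤ x / 2))
    have hnx : (n : ℝ) ≤ x / 2 := Nat.floor_le hxhalf
    have h2n : (2 * n : ℕ) ≤ ⌊x⌋₊ := Nat.le_floor (by push_cast; linarith)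
    have hmono : ((primorial (2 * n) : ℕ) : ℝ) ≤ ((primorial ⌊x⌋₊ : ℕ) : ℝ) := by
      exact_mod_cast cheb_primorial_mono h2n
    have hpos : (0 : ℝ) < ((primorial (2 * n) : ℕ) : ℝ) := by
      exact_mod_cast primorial_pos (2 * n)
    have hlow : (n : ℝ) ≤ chebyshevTheta x := by
      rw [chebyshevTheta_eq]
      exact (hN n hnN).trans (Real.log_le_log hpos hmono)
    have hfl : x / 2 - 1 < (n : ℝ) := Nat.sub_one_lt_floor (x / 2)
    have : 1/4 * x ≤ x / 2 - 1 := by linarith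
    linarith
  · -- upper bound
    rw [chebyshevTheta_eq]
    have h1 : ((primorial ⌊x⌋₊ : ℕ) : ℝ) ≤ (4 : ℝ) ^ ⌊x⌋₊ := by
      exact_mod_cast primorial_le_4_pow ⌊x⌋₊
    have hpos : (0 : ℝ) < ((primorial ⌊x⌋₊ : ℕ) : ℝ) := by
      exact_mod_cast primorial_pos ⌊x⌋₊
    have h2 : Real.log ((primorial ⌊x⌋₊ : ℕ) : ℝ) ≤ (⌊x⌋₊ : ℝ) * Real.log 4 := by
      calc Real.log ((primorial ⌊x⌋₊ : ℕ) : ℝ) ≤ Real.log ((4:ℝ) ^ ⌊x⌋₊) :=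
            Real.log_le_log hpos h1
        _ = (⌊x⌋₊ : ℝ) * Real.log 4 := by rw [Real.log_pow]
    have hfl : (⌊x⌋₊ : ℝ) ≤ x := Nat.floor_le hx0.le
    have hlog4 : Real.log 4 < 2 := by
      have h4 : (4 : ℝ) < Real.exp 2 := by
        have h := Real.exp_one_gt_d9
        rw [show (2:ℝ) = 1 + 1 by norm_num, Real.exp_add]
        nlinarith
      exact (Real.log_lt_iff_lt_exp (by norm_num)).2 h4
    have hlog4nn : 0 ≤ Real.log 4 := Real.log_nonneg (by norm_num)
    calc Real.log ((primorial ⌊x⌋₊ : ℕ) : ℝ) ≤ (⌊x⌋₊ : ℝ) * Real.log 4 := h2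
      _ ≤ x * Real.log 4 := by nlinarith
      _ < 2 * x := by nlinarith
end

section
/- Let ω(N) denote the number of distinct prime divisors of N. Then: (i) for every ε > 0 there is N_ε such that ω(N) < (1 + ε) · log N / log log N for all integers N ≥ N_ε; and (ii) for every ε > 0, the inequality ω(N) > (1 − ε) · log N / log log N holds for infinitely many integers N. -/
open Real Filter

open Asymptotics

namespace OmegaAux

open Finset Nat

/-- Product of distinct naturals, each at least 2, is at least `card !`. -/
lemma factorial_le_prod : ∀ (n : ℕ) (s : Finset ℕ), s.card = n → (∀ x ∈ s, 2 ≤ x) →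
    n ! ≤ ∏ x ∈ s, x := by
  intro n
  induction n with
  | zero => intro s hc _; simp [Finset.card_eq_zero.mp hc]
  | succ n ih =>
    intro s hc hs
    have hne : s.Nonempty := Finset.card_pos.mp (by omega)
    set m := s.max' hne with hm
    have hmem : m ∈ s := s.max'_mem hne
    have hsub : s ⊆ Finset.Icc 2 m := fun x hx => Finset.mem_Icc.mpr ⟨hs x hx, s.le_max' x hx⟩
    have hcard : s.card ≤ m + 1 - 2 := by
      have := Finset.card_le_card hsub
      rwa [Nat.card_Icc] at this
    have hmn : n + 1 ≤ m := by omega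
    have hrec := ih (s.erase m) (by rw [Finset.card_erase_of_mem hmem, hc]; rfl) 
      (fun x hx => hs x (Finset.mem_of_mem_erase hx))
    calc (n+1)! = (n+1) * n ! := rfl
      _ ≤ m * ∏ x ∈ s.erase m, x := Nat.mul_le_mul hmn hrec
      _ = ∏ x ∈ s, x := Finset.mul_prod_erase s (fun x => x) hmem

lemma pow_le_exp_mul_factorial (k : ℕ) : (k:ℝ)^k ≤ Real.exp k * (k !) := by
  have h := Real.sum_le_exp_of_nonneg (x := (k:ℝ)) (Nat.cast_nonneg k) (k+1)
  have hterm : (k:ℝ)^k / (k !) ≤ ∑ i ∈ Finset.range (k+1), (k:ℝ)^i / (i !) :=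
    Finset.single_le_sum (f := fun i => (k:ℝ)^i / (i !)) (fun i _ => by positivity)
      (Finset.self_mem_range_succ k)
  have h2 := hterm.trans h
  rw [div_le_iff₀ (by positivity)] at h2
  calc (k:ℝ)^k ≤ Real.exp k * (k !) := by linarith [h2]

lemma log_factorial_ge (k : ℕ) : (k:ℝ) * Real.log k - k ≤ Real.log (k !) := by
  have hpos : (0:ℝ) < (k:ℝ)^k := by
    rcases Nat.eq_zero_or_pos k with h | h
    · simp [h]
    · positivity
  have h1 : Real.log ((k:ℝ)^k) ≤ Real.log (Real.exp k * (k !)) :=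
    Real.log_le_log hpos (pow_le_exp_mul_factorial k)
  rw [Real.log_pow, Real.log_mul (Real.exp_ne_zero _) (by positivity), Real.log_exp] at h1
  linarith



lemma part_i (ε : ℝ) (hε : 0 < ε) : ∃ Nε : ℕ, ∀ N : ℕ, Nε ≤ N →
    (N.primeFactors.card : ℝ) < (1 + ε) * Real.log N / Real.log (Real.log N) := by
  have hT : Tendsto (fun N : ℕ => Real.log (Real.log N)) atTop atTop :=
    tendsto_log_atTop.comp (tendsto_log_atTop.comp tendsto_natCast_atTop_atTop)
  set B : ℝ := 5 * (1+ε) / ε with hB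
  have hBpos : 0 < B := by positivity
  have hev : ∀ᶠ N : ℕ in atTop,
      (N.primeFactors.card : ℝ) < (1+ε) * Real.log N / Real.log (Real.log N) := by
    filter_upwards [hT.eventually_ge_atTop (B^2), hT.eventually_gt_atTop 1,
      eventually_ge_atTop 1] with N hNB hN1 hNge
    set L := Real.log N with hL
    set LL := Real.log L with hLL
    have hLL1 : 1 < LL := hN1
    have hLLpos : 0 < LL := by linarith
    have hLpos : 0 < L := by
      rcases lt_or_eq_of_le (Real.log_natCast_nonneg N) with h | h
      · exact h
      · exfalso
        have : LL = 0 := by rw [hLL, hL, ← h, Real.log_zero]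
        linarith
    -- sqrt facts
    have hsB : B ≤ Real.sqrt LL := by
      calc B = Real.sqrt (B^2) := (Real.sqrt_sq hBpos.le).symm
        _ ≤ Real.sqrt LL := Real.sqrt_le_sqrt hNB
    have hs1 : 1 ≤ Real.sqrt LL := by
      calc (1:ℝ) = Real.sqrt 1 := Real.sqrt_one.symm
        _ ≤ Real.sqrt LL := Real.sqrt_le_sqrt (by linarith)
    have hss : Real.sqrt LL * Real.sqrt LL = LL := Real.mul_self_sqrt hLLpos.le
    have hsnn : 0 ≤ Real.sqrt LL := Real.sqrt_nonneg _
    set k := N.primeFactors.card with hk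
    -- k! ≤ N
    have step1 : k ! ≤ N := by
      refine le_trans (factorial_le_prod k N.primeFactors rfl
        (fun x hx => (Nat.prime_of_mem_primeFactors hx).two_le)) ?_
      exact Nat.le_of_dvd (by omega) (Nat.prod_primeFactors_dvd N)
    have step2 : (k:ℝ) * Real.log k - k ≤ L := by
      have h1 : Real.log ((k ! : ℕ) : ℝ) ≤ L := by
        apply Real.log_le_log (by exact_mod_cast Nat.factorial_pos k)
        exact_mod_cast step1
      have := log_factorial_ge k
      linarith
    have hkey : 2 * Real.log LL + 1 < ε/(1+ε) * LL := by
      have h4 : Real.log LL < 2 * Real.sqrt LL := by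
        have he : Real.log LL = 2 * Real.log (Real.sqrt LL) := by
          conv_lhs => rw [← hss]
          rw [Real.log_mul (by positivity) (by positivity)]
          ring
        have := Real.log_le_sub_one_of_pos (by positivity : 0 < Real.sqrt LL)
        linarith
      have hc : 0 ≤ ε/(1+ε) := by positivity
      have key : ε/(1+ε) * B = 5 := by
        rw [hB]
        field_simp <;> ring
      have h5a : 5 ≤ ε/(1+ε) * Real.sqrt LL := by
        calc (5:ℝ) = ε/(1+ε)*B := key.symm
          _ ≤ ε/(1+ε)*Real.sqrt LL := mul_le_mul_of_nonneg_left hsB hc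
      have h5 : 5 * Real.sqrt LL ≤ ε/(1+ε) * LL := by
        calc 5 * Real.sqrt LL ≤ (ε/(1+ε)*Real.sqrt LL) * Real.sqrt LL :=
              mul_le_mul_of_nonneg_right h5a hsnn
          _ = ε/(1+ε) * LL := by rw [mul_assoc, hss]
      linarith
    by_cases hcase : (k:ℝ) ≤ L / LL^2
    · calc (k:ℝ) ≤ L/LL^2 := hcase
        _ < (1+ε)*L/LL := by
          rw [div_lt_div_iff₀ (by positivity) hLLpos]
          have h9 : 0 < (1+ε)*LL - 1 := by nlinarith
          have h10 := mul_pos (mul_pos hLpos hLLpos) h9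
          nlinarith [h10]
    · push_neg at hcase
      have hkpos : 0 < (k:ℝ) := lt_trans (by positivity) hcase
      have hlogk : LL - 2 * Real.log LL < Real.log k := by
        have h7 : Real.log (L / LL^2) < Real.log k := Real.log_lt_log (by positivity) hcase
        rw [Real.log_div hLpos.ne' (by positivity), Real.log_pow] at h7
        rw [← hLL] at h7
        push_cast at h7
        linarith
      have hgt : LL / (1+ε) < Real.log k - 1 := by
        have hid2 : LL/(1+ε) + ε/(1+ε)*LL = LL := by
          field_simp <;> ring
        linarith [hkey, hlogk]
      have hfin : (k:ℝ) * (LL/(1+ε)) < L := by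
        have : (k:ℝ) * (LL/(1+ε)) < (k:ℝ) * (Real.log k - 1) := by
          exact mul_lt_mul_of_pos_left hgt hkpos
        nlinarith [step2]
      rw [lt_div_iff₀ hLLpos]
      have h11 := mul_lt_mul_of_pos_left hfin (by positivity : (0:ℝ) < 1+ε)
      have h12 : (1+ε) * ((k:ℝ) * (LL/(1+ε))) = (k:ℝ) * LL := by
        field_simp <;> ring
      linarith [h11]
  obtain ⟨a, ha⟩ := eventually_atTop.mp hev
  exact ⟨a, ha⟩



/-- Chebyshev-type upper bound on central binomial in terms of primorial. -/
lemma centralBinom_le_primorial (j : ℕ) (hj : 0 < j) :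
    Nat.centralBinom j ≤ (2*j) ^ (Nat.sqrt (2*j)) * primorial (2*j) := by
  have j2_pos : 1 ≤ 2 * j := by omega
  set S := (Finset.range (2*j+1)).filter Nat.Prime with hS
  set f : ℕ → ℕ := fun x => x ^ (Nat.centralBinom j).factorization x with hf
  have hSprod : ∏ x ∈ S, f x = ∏ x ∈ Finset.range (2*j+1), f x := by
    refine Finset.prod_filter_of_ne fun p _ h => ?_
    contrapose! h
    show p ^ (Nat.centralBinom j).factorization p = 1
    rw [Nat.factorization_eq_zero_of_not_prime _ h, pow_zero]
  rw [← Nat.prod_pow_factorization_centralBinom j, ← hSprod,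
    ← Finset.prod_filter_mul_prod_filter_not S (· ≤ Nat.sqrt (2*j))]
  have hprim : primorial (2*j) = ∏ p ∈ S, p := rfl
  apply Nat.mul_le_mul
  · refine (Finset.prod_le_prod' fun p _ => (?_ : f p ≤ 2*j)).trans ?_
    · exact Nat.pow_factorization_choose_le (by omega)
    · have hcard : (Finset.Icc 1 (Nat.sqrt (2*j))).card = Nat.sqrt (2*j) := by
        rw [Nat.card_Icc, Nat.add_sub_cancel]
      rw [Finset.prod_const]
      refine pow_right_mono₀ j2_pos ((Finset.card_le_card fun x hx => ?_).trans hcard.le)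
      obtain ⟨h1, h2⟩ := Finset.mem_filter.1 hx
      exact Finset.mem_Icc.mpr ⟨(Finset.mem_filter.1 h1).2.one_lt.le, h2⟩
  · rw [hprim]
    refine (Finset.prod_le_prod' fun p hp => (?_ : f p ≤ p)).trans ?_
    · obtain ⟨h1, h2⟩ := Finset.mem_filter.1 hp
      refine (pow_right_mono₀ (Finset.mem_filter.1 h1).2.one_lt.le ?_).trans (pow_one p).le
      exact Nat.factorization_choose_le_one (Nat.sqrt_lt'.mp <| not_le.1 h2)
    · refine Finset.prod_le_prod_of_subset_of_one_le' (Finset.filter_subset _ _) ?_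
      exact fun p hp _ => (Finset.mem_filter.1 hp).2.one_lt.le

lemma primorial_monotone : Monotone primorial := by
  intro m n hmn
  refine Finset.prod_le_prod_of_subset_of_one_le' ?_ ?_
  · exact Finset.filter_subset_filter _ (Finset.range_subset_range.mpr (by omega))
  · exact fun p hp _ => (Finset.mem_filter.1 hp).2.one_lt.le

/-- Real log lower bound from the central binomial bound. -/
lemma log_primorial_ge (j : ℕ) (hj : 4 ≤ j) :
    (j:ℝ) * Real.log 4 - Real.log j - Real.sqrt (2*j) * Real.log (2*j)
      ≤ Real.log (primorial (2*j)) := by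
  have h1 : 4 ^ j ≤ j * ((2*j) ^ (Nat.sqrt (2*j)) * primorial (2*j)) := by
    calc 4 ^ j ≤ j * Nat.centralBinom j := (Nat.four_pow_lt_mul_centralBinom j hj).le
      _ ≤ j * ((2*j) ^ (Nat.sqrt (2*j)) * primorial (2*j)) :=
        Nat.mul_le_mul_left j (centralBinom_le_primorial j (by omega))
  have h2 : Real.log ((4:ℝ) ^ j) ≤
      Real.log ((j:ℝ) * ((2*j:ℕ) ^ (Nat.sqrt (2*j)) * (primorial (2*j) : ℝ))) := by
    apply Real.log_le_log (by positivity)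
    push_cast
    exact_mod_cast h1
  have hjpos : (0:ℝ) < j := by positivity
  have h2j : (0:ℝ) < ((2*j:ℕ):ℝ) := by positivity
  have hppos : (0:ℝ) < (primorial (2*j) : ℝ) := by exact_mod_cast primorial_pos (2*j)
  rw [Real.log_pow, Real.log_mul hjpos.ne' (by positivity),
    Real.log_mul (by positivity) hppos.ne', Real.log_pow] at h2
  have hsq : (Nat.sqrt (2*j) : ℝ) * Real.log ((2*j:ℕ):ℝ)
      ≤ Real.sqrt ((2*j:ℕ):ℝ) * Real.log ((2*j:ℕ):ℝ) := by
    apply mul_le_mul_of_nonneg_right Real.nat_sqrt_le_real_sqrt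
    apply Real.log_nonneg
    have : (1:ℕ) ≤ 2*j := by omega
    exact_mod_cast this
  push_cast at h2 hsq ⊢
  linarith


lemma sqrtlog_le : ∀ᶠ x : ℝ in atTop, (Real.sqrt x + 1) * Real.log x ≤ x/5 := by
  have h := (isLittleO_log_rpow_atTop (by norm_num : (0:ℝ) < 1/2)).def
    (by norm_num : (0:ℝ) < 1/10)
  filter_upwards [h, eventually_ge_atTop (1:ℝ)] with x hx hx1
  have hs : Real.sqrt x = x ^ ((1:ℝ)/2) := Real.sqrt_eq_rpow x
  rw [Real.norm_eq_abs, Real.norm_eq_abs] at hx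
  have hlognn : 0 ≤ Real.log x := Real.log_nonneg hx1
  have hrnn : 0 ≤ x ^ ((1:ℝ)/2) := Real.rpow_nonneg (by linarith) _
  rw [abs_of_nonneg hlognn, abs_of_nonneg hrnn, ← hs] at hx
  have hs1 : 1 ≤ Real.sqrt x := by
    rw [show (1:ℝ) = Real.sqrt 1 from Real.sqrt_one.symm]
    exact Real.sqrt_le_sqrt hx1
  have hss : Real.sqrt x * Real.sqrt x = x := Real.mul_self_sqrt (by linarith)
  nlinarith [mul_nonneg (by linarith : (0:ℝ) ≤ Real.sqrt x - 1) hlognn,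
    mul_nonneg (by linarith : (0:ℝ) ≤ Real.sqrt x)
      (by linarith : (0:ℝ) ≤ 1/10 * Real.sqrt x - Real.log x)]

lemma quarter_le_log_primorial : ∀ᶠ n : ℕ in atTop, (n:ℝ)/4 ≤ Real.log (primorial n) := by
  filter_upwards [eventually_ge_atTop 8, tendsto_natCast_atTop_atTop.eventually sqrtlog_le]
    with n h8 hF
  set j := n / 2 with hj
  have hj4 : 4 ≤ j := by omega
  have h2j : 2 * j ≤ n := by omega
  have key := log_primorial_ge j hj4
  have hmono : Real.log (primorial (2*j)) ≤ Real.log (primorial n) := by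
    apply Real.log_le_log (by exact_mod_cast primorial_pos (2*j))
    exact_mod_cast primorial_monotone h2j
  have hn8 : (8:ℝ) ≤ n := by exact_mod_cast h8
  have hjn : (j:ℝ) ≤ n := by exact_mod_cast (by omega : j ≤ n)
  have h2jn : (2*(j:ℝ)) ≤ n := by
    have : ((2*j:ℕ):ℝ) ≤ n := by exact_mod_cast h2j
    push_cast at this
    linarith
  have hjlb : ((n:ℝ) - 1)/2 ≤ j := by
    have h1 : n ≤ 2*j + 1 := by omega
    have h2 : (n:ℝ) ≤ 2*(j:ℝ) + 1 := by exact_mod_cast h1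
    linarith
  have hjpos : (0:ℝ) < j := by
    have : (0:ℕ) < j := by omega
    exact_mod_cast this
  have hb1 : Real.log (j:ℝ) ≤ Real.log n := Real.log_le_log hjpos hjn
  have hb2 : Real.sqrt (2*(j:ℝ)) ≤ Real.sqrt n := Real.sqrt_le_sqrt h2jn
  have hb3 : Real.log (2*(j:ℝ)) ≤ Real.log n := Real.log_le_log (by linarith) h2jn
  have hb4 : 0 ≤ Real.log (2*(j:ℝ)) := Real.log_nonneg (by linarith)
  have hsnn : 0 ≤ Real.sqrt (n:ℝ) := Real.sqrt_nonneg _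
  have hprod : Real.sqrt (2*(j:ℝ)) * Real.log (2*(j:ℝ)) ≤ Real.sqrt n * Real.log n :=
    mul_le_mul hb2 hb3 hb4 hsnn
  have h42 : Real.log 4 = 2 * Real.log 2 := by
    rw [show (4:ℝ) = 2^2 by norm_num, Real.log_pow]
    push_cast; ring
  have hlog2 : (0.6931471803:ℝ) < Real.log 2 := Real.log_two_gt_d9
  have hlognn : 0 ≤ Real.log (n:ℝ) := Real.log_nonneg (by linarith)
  have hA : ((n:ℝ)-1)/2 * Real.log 4 ≤ (j:ℝ) * Real.log 4 := by
    apply mul_le_mul_of_nonneg_right hjlb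
    rw [h42]; linarith
  have hB : 0.6931471803*((n:ℝ)-1) ≤ ((n:ℝ)-1)/2 * Real.log 4 := by
    rw [h42]
    have h0 : (0:ℝ) ≤ (n:ℝ) - 1 := by linarith
    nlinarith [mul_le_mul_of_nonneg_left hlog2.le h0]
  linarith [key, hmono, hprod, hb1, hA, hB, hF]


lemma part_ii (ε : ℝ) (hε : 0 < ε) : ∃ᶠ N : ℕ in atTop,
    (N.primeFactors.card : ℝ) > (1 - ε) * Real.log N / Real.log (Real.log N) := by
  set ε' := min ε (1/2) with hε'def
  have hε' : 0 < ε' := lt_min hε (by norm_num)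
  have hε'le : ε' ≤ ε := min_le_left _ _
  have hε'1 : ε' ≤ 1/2 := min_le_right _ _
  have hlogn : Tendsto (fun n:ℕ => Real.log n) atTop atTop :=
    tendsto_log_atTop.comp tendsto_natCast_atTop_atTop
  have hev : ∀ᶠ n : ℕ in atTop, n ≤ primorial n ∧
      ((primorial n).primeFactors.card : ℝ) >
        (1 - ε) * Real.log (primorial n) / Real.log (Real.log (primorial n)) := by
    filter_upwards [eventually_ge_atTop 9, quarter_le_log_primorial,
      hlogn.eventually_gt_atTop (Real.log 4 / ε'),
      tendsto_natCast_atTop_atTop.eventually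
        (Real.isLittleO_log_id_atTop.def (by norm_num : (0:ℝ) < 1/4)),
      hlogn.eventually_gt_atTop 0] with n hn9 hθ4 hε'n hlog14 hlognpos
    set θ := Real.log (primorial n) with hθdef
    have hn9' : (9:ℝ) ≤ n := by exact_mod_cast hn9
    have hnpos : (0:ℝ) < n := by linarith
    have hθ2 : (2:ℝ) < θ := by linarith
    have hθpos : (0:ℝ) < θ := by linarith
    have hlogθpos : 0 < Real.log θ := Real.log_pos (by linarith)
    have hPpos : (0:ℝ) < (primorial n : ℝ) := by exact_mod_cast primorial_pos n
    -- n ≤ primorial n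
    have hlogle : Real.log (n:ℝ) ≤ θ := by
      have h := hlog14
      simp only [Real.norm_eq_abs, id_eq] at h
      have h2 : Real.log (n:ℝ) ≤ 1/4 * (n:ℝ) := by
        calc Real.log (n:ℝ) ≤ |Real.log (n:ℝ)| := le_abs_self _
          _ ≤ 1/4 * |(n:ℝ)| := h
          _ = 1/4 * (n:ℝ) := by rw [abs_of_nonneg hnpos.le]
      linarith
    have hNle : n ≤ primorial n := by
      have h := Real.exp_le_exp.mpr hlogle
      rw [Real.exp_log hnpos, hθdef, Real.exp_log hPpos] at h
      exact_mod_cast h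
    refine ⟨hNle, ?_⟩
    -- prime factors of primorial
    set S := (Finset.range (n+1)).filter Nat.Prime with hSdef
    have hPF : (primorial n).primeFactors = S :=
      Nat.primeFactors_prod (fun p hp => (Finset.mem_filter.1 hp).2)
    set pc := S.card with hpcdef
    -- θ ≤ π * log n
    have hθsum : θ = ∑ p ∈ S, Real.log p := by
      rw [hθdef, show ((primorial n : ℕ):ℝ) = ∏ p ∈ S, (p:ℝ) from by
        rw [show primorial n = ∏ p ∈ S, p from rfl]; push_cast; rfl]
      exact Real.log_prod (fun p hp => by
        have := (Finset.mem_filter.1 hp).2.pos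
        positivity)
    have hθle : θ ≤ (pc:ℝ) * Real.log n := by
      rw [hθsum]
      calc ∑ p ∈ S, Real.log p ≤ ∑ _p ∈ S, Real.log n := by
            refine Finset.sum_le_sum fun p hp => ?_
            have hp2 := (Finset.mem_filter.1 hp).2.pos
            have hpn : p ≤ n := by
              have := Finset.mem_range.1 (Finset.mem_filter.1 hp).1
              omega
            exact Real.log_le_log (by exact_mod_cast hp2) (by exact_mod_cast hpn)
        _ = (pc:ℝ) * Real.log n := by rw [Finset.sum_const, nsmul_eq_mul]
    -- log θ > (1-ε') log n
    have hlogθlb : Real.log (n:ℝ) - Real.log 4 ≤ Real.log θ := by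
      have h := Real.log_le_log (by positivity : (0:ℝ) < (n:ℝ)/4) hθ4
      rwa [Real.log_div hnpos.ne' (by norm_num)] at h
    have hkey : (1-ε') * Real.log n < Real.log θ := by
      have h := (div_lt_iff₀ hε').mp hε'n
      nlinarith [hlognpos]
    -- conclude
    have hpcge : θ / Real.log n ≤ (pc:ℝ) := by
      rw [div_le_iff₀ hlognpos]
      exact hθle
    have hmid : (1-ε')*θ/Real.log θ < θ/Real.log n := by
      rw [div_lt_div_iff₀ hlogθpos hlognpos]
      calc (1-ε')*θ*Real.log n = θ * ((1-ε')*Real.log n) := by ring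
        _ < θ * Real.log θ := by exact mul_lt_mul_of_pos_left hkey hθpos
    have hεε' : (1-ε)*θ/Real.log θ ≤ (1-ε')*θ/Real.log θ := by
      gcongr
    rw [hPF, ← hpcdef]
    exact lt_of_le_of_lt hεε' (lt_of_lt_of_le hmid hpcge)
  have htend : Tendsto (fun n => primorial n) atTop atTop :=
    tendsto_atTop_mono' atTop (hev.mono fun n h => h.1) tendsto_id
  exact htend.frequently ((hev.mono fun n h => h.2).frequently)

end OmegaAux

/-- **Maximal order of `ω`.** (i) For every `ε > 0` there is `N_ε` such that
`ω(N) < (1+ε) · log N / log log N` for all `N ≥ N_ε`; and (ii) for every `ε > 0`,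
`ω(N) > (1−ε) · log N / log log N` for infinitely many integers `N`. -/
theorem omega_bounds :
    (∀ ε : ℝ, 0 < ε → ∃ Nε : ℕ, ∀ N : ℕ, Nε ≤ N →
        (N.primeFactors.card : ℝ) < (1 + ε) * Real.log N / Real.log (Real.log N)) ∧
      (∀ ε : ℝ, 0 < ε → ∃ᶠ N : ℕ in Filter.atTop,
        (N.primeFactors.card : ℝ) > (1 - ε) * Real.log N / Real.log (Real.log N)) :=
  ⟨OmegaAux.part_i, OmegaAux.part_ii⟩
end
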